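/- (Generalized Margolus–Levitin gate time, after Zieliński–Zych.) Let N ≥ 2, θ ∈ ℝ, V an N×N unitary complex matrix, p ≥ 1 a natural number, and κ > 0 real. Let ψ = V e₀ (e₀ the first standard basis vector), let H be a Hermitian N×N matrix with smallest eigenvalue E₀ satisfying the constraint (⟨ψ, (H − E₀•1)^p ψ⟩)^{1/p} = κ, and let T > 0 satisfy (−i T) • H = (π/2) • (V * (Ô(θ) ⊕ 0_{N−2}) * V†) (so that exp(−i T H) equals the swap gate O_V = V(Ô(θ) ⊕ I_{N−2})V† and (−iT)•H is its logarithm along the trajectory). Then T = π / (κ · 2^{1/p}). In particular for p = 1 this is the Margolus–Levitin time T = π/(2(Ē − E₀)). -/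

import Mathlib

open Matrix Complex

/-- The 2×2 matrix `Ô(θ) = !![0, i·e^{−iθ}; i·e^{iθ}, 0]`. -/
noncomputable def Ohat (θ : ℝ) : Matrix (Fin 2) (Fin 2) ℂ :=
  !![0, Complex.I * Complex.exp (-(Complex.I * (θ : ℂ)));
     Complex.I * Complex.exp (Complex.I * (θ : ℂ)), 0]

lemma Ohat_mul_Ohat (θ : ℝ) : Ohat θ * Ohat θ = -1 := by
  have h : Complex.exp (-(Complex.I * (θ:ℂ))) * Complex.exp (Complex.I * (θ:ℂ)) = 1 := by
    rw [← Complex.exp_add]; simp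
  ring_nf at h
  ext i j
  fin_cases i <;> fin_cases j <;>
    simp [Ohat, Matrix.mul_apply, Fin.sum_univ_two] <;>
    · ring_nf
      rw [Complex.I_sq]
      linear_combination -h

lemma rsmulC {m n : Type*} (r : ℝ) (A : Matrix m n ℂ) : r • A = (r:ℂ) • A := by
  ext i j; simp [Complex.real_smul]

lemma rsmulV {n : Type*} (r : ℝ) (v : n → ℂ) : r • v = (r:ℂ) • v := by
  ext i; simp [Complex.real_smul]

lemma myConjPow {n : Type*} [Fintype n] [DecidableEq n] (V X : Matrix n n ℂ)
    (h : Vᴴ * V = 1) (k : ℕ) : (V * X * Vᴴ)^(k+1) = V * X^(k+1) * Vᴴ := by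
  induction k with
  | zero => simp
  | succ k ih =>
    rw [pow_succ, ih]
    simp only [Matrix.mul_assoc]
    rw [← Matrix.mul_assoc Vᴴ V, h, Matrix.one_mul, ← Matrix.mul_assoc (X^(k+1)), ← pow_succ]

noncomputable def Bm (θ : ℝ) : Matrix (Fin 2) (Fin 2) ℂ := 1 + Complex.I • Ohat θ

lemma Bm_sq (θ : ℝ) : Bm θ * Bm θ = (2:ℂ) • Bm θ := by
  simp only [Bm, mul_add, add_mul, one_mul, mul_one, smul_mul_assoc, mul_smul_comm,
    smul_smul, Complex.I_mul_I, Ohat_mul_Ohat, neg_smul, one_smul, smul_neg, neg_neg, smul_add]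
  module

lemma Bm_pow (θ : ℝ) (q : ℕ) : Bm θ ^ (q+1) = ((2:ℂ)^q) • Bm θ := by
  induction q with
  | zero => simp
  | succ q ih => rw [pow_succ, ih, smul_mul_assoc, Bm_sq, smul_smul, pow_succ]

lemma Wm_pow {k : ℕ} (θ : ℝ) (q : ℕ) :
    (Matrix.fromBlocks (Bm θ) 0 0 (1 : Matrix (Fin k) (Fin k) ℂ)) ^ (q+1) =
      Matrix.fromBlocks (Bm θ ^ (q+1)) 0 0 1 := by
  induction q with
  | zero => simp
  | succ q ih => rw [pow_succ, ih, Matrix.fromBlocks_multiply, ← pow_succ]; simp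

lemma det_aux (θ : ℝ) (z w : ℂ) :
    Matrix.det (z • Ohat θ + w • (1 : Matrix (Fin 2) (Fin 2) ℂ)) = w^2 + z^2 := by
  have hexp : Complex.exp (-(Complex.I * (θ:ℂ))) * Complex.exp (Complex.I * (θ:ℂ)) = 1 := by
    rw [← Complex.exp_add]; simp
  rw [Matrix.det_fin_two]
  simp [Ohat]
  ring_nf
  ring_nf at hexp
  linear_combination (-z^2*Complex.I^2) * hexp + (-z^2) * Complex.I_sq

/-- Generalized Margolus–Levitin gate time (after Zieliński–Zych): if a
time-independent Hamiltonian `H` constrained so that its `p`-th fractional moment in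
the state `ψ = V e₀` equals `κ` implements the swap gate `O_V = V (Ô(θ) ⊕ I) V†` at
time `T > 0` (i.e. `(−iT)•H` is the given logarithm of `O_V`), then
`T = π/(κ · 2^{1/p})`. -/
theorem generalized_margolus_levitin_gate_time
    {N : ℕ} (hN : 2 ≤ N) (θ : ℝ) (V : Matrix (Fin N) (Fin N) ℂ) (hV : V * Vᴴ = 1)
    (p : ℕ) (hp : 1 ≤ p) (κ : ℝ) (hκ : 0 < κ)
    (ψ : Fin N → ℂ)
    (hψ : ψ = V *ᵥ Pi.single (⟨0, by omega⟩ : Fin N) 1)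
    (H : Matrix (Fin N) (Fin N) ℂ) (hH : H.IsHermitian)
    (hconstraint :
      ((star ψ ⬝ᵥ ((H - (⨅ i, hH.eigenvalues i : ℝ) • (1 : Matrix (Fin N) (Fin N) ℂ)) ^ p *ᵥ ψ)).re)
          ^ (1 / (p : ℝ)) = κ)
    (T : ℝ) (hT : 0 < T)
    (hlog : ((-Complex.I) * (T : ℂ)) • H = (Real.pi / 2 : ℝ) •
        (V * (Matrix.reindex (finSumFinEquiv.trans (finCongr (Nat.add_sub_cancel' hN)))
                (finSumFinEquiv.trans (finCongr (Nat.add_sub_cancel' hN)))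
                (Matrix.fromBlocks (Ohat θ) 0 0 (0 : Matrix (Fin (N - 2)) (Fin (N - 2)) ℂ))) * Vᴴ)) :
    T = Real.pi / (κ * (2 : ℝ) ^ (1 / (p : ℝ))) := by
  have hπ := Real.pi_pos
  have hT0 : T ≠ 0 := ne_of_gt hT
  have hTC : (T:ℂ) ≠ 0 := by exact_mod_cast hT0
  set c : ℝ := Real.pi / (2*T) with hc
  have hc0 : 0 < c := by positivity
  set e : Fin 2 ⊕ Fin (N-2) ≃ Fin N :=
    finSumFinEquiv.trans (finCongr (Nat.add_sub_cancel' hN)) with he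
  set φ : Matrix (Fin 2 ⊕ Fin (N-2)) (Fin 2 ⊕ Fin (N-2)) ℂ ≃ₐ[ℂ] Matrix (Fin N) (Fin N) ℂ :=
    Matrix.reindexAlgEquiv ℂ ℂ e with hφ
  set M₀ : Matrix (Fin 2 ⊕ Fin (N-2)) (Fin 2 ⊕ Fin (N-2)) ℂ :=
    Matrix.fromBlocks (Ohat θ) 0 0 0 with hM₀
  have hVV : Vᴴ * V = 1 := mul_eq_one_comm.mp hV
  set G : Matrix (Fin N) (Fin N) ℂ := V * φ M₀ * Vᴴ with hG
  -- step 1: H = (I c) • G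
  have hHf : H = (Complex.I * (c:ℂ)) • G := by
    have hscal : ((Real.pi/2 : ℝ) : ℂ) = ((-Complex.I)*(T:ℂ)) * (Complex.I * (c:ℂ)) := by
      rw [hc]
      push_cast
      field_simp
      ring_nf
      rw [Complex.I_sq]
      ring
    have h2 : ((-Complex.I)*(T:ℂ)) • H =
        ((-Complex.I)*(T:ℂ)) • ((Complex.I * (c:ℂ)) • G) := by
      rw [hlog, rsmulC, hscal, smul_smul, hG, hφ]
      rfl
    exact smul_right_injective _ (by simp [Complex.I_ne_zero, hTC]) h2
  -- step 2: H^3 = c^2 • H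
  have hM₀3 : M₀ * M₀ * M₀ = -M₀ := by
    rw [hM₀]
    simp [Matrix.fromBlocks_multiply, Ohat_mul_Ohat, Matrix.fromBlocks_neg]
  have hG3 : G * G * G = -G := by
    have : G * G * G = G ^ 3 := by rw [pow_succ, pow_two]
    rw [this, hG, myConjPow V _ hVV 2, ← map_pow]
    have : M₀ ^ 3 = -M₀ := by rw [pow_succ, pow_two, hM₀3]
    rw [this, map_neg]
    simp [Matrix.neg_mul, Matrix.mul_neg]
  have hH3 : H * H * H = ((c^2 : ℝ) : ℂ) • H := by
    rw [hHf]
    rw [smul_mul_smul_comm, smul_mul_smul_comm, hG3, smul_neg, smul_smul]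
    have : Complex.I * (c:ℂ) * (Complex.I * (c:ℂ)) * (Complex.I * (c:ℂ))
        = -(((c^2:ℝ):ℂ) * (Complex.I * (c:ℂ))) := by
      rw [Complex.ofReal_pow]
      linear_combination (Complex.I * (c:ℂ)^3) * Complex.I_sq
    rw [this, neg_smul, neg_neg]
  -- step 3: eigenvalue trichotomy
  have hbound : ∀ i, hH.eigenvalues i = -c ∨ hH.eigenvalues i = 0 ∨ hH.eigenvalues i = c := by
    intro i
    set μ : ℝ := hH.eigenvalues i with hμdef
    have hv := hH.mulVec_eigenvectorBasis i
    have hvne : ⇑(hH.eigenvectorBasis i) ≠ 0 := by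
      intro h
      exact hH.eigenvectorBasis.orthonormal.ne_zero i (by ext x; exact congrFun h x)
    set v : Fin N → ℂ := ⇑(hH.eigenvectorBasis i) with hvdef
    have e1 : H *ᵥ v = ((μ:ℝ):ℂ) • v := by rw [hv, rsmulV]
    have h3 : (H * H * H) *ᵥ v = ((μ^3 : ℝ) : ℂ) • v := by
      simp only [← Matrix.mulVec_mulVec, Matrix.mulVec_smul, e1, smul_smul]
      push_cast
      ring_nf
    have h3' : (H * H * H) *ᵥ v = ((c^2 * μ : ℝ) : ℂ) • v := by
      rw [hH3, Matrix.smul_mulVec, e1, smul_smul]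
      push_cast
      ring_nf
    have hsc : ((μ^3 : ℝ) : ℂ) = ((c^2 * μ : ℝ) : ℂ) := by
      have heq := h3.symm.trans h3'
      have hz : (((μ^3 : ℝ) : ℂ) - ((c^2 * μ : ℝ) : ℂ)) • v = 0 := by
        rw [sub_smul, heq, sub_self]
      rcases smul_eq_zero.mp hz with h | h
      · exact sub_eq_zero.mp h
      · exact absurd h hvne
    have hμ : μ^3 = c^2 * μ := by exact_mod_cast hsc
    have hfac : μ * ((μ - c) * (μ + c)) = 0 := by linear_combination hμ
    rcases mul_eq_zero.mp hfac with h | h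
    · right; left; exact h
    · rcases mul_eq_zero.mp h with h | h
      · right; right; linarith [sub_eq_zero.mp h]
      · left; linarith [add_eq_zero_iff_eq_neg.mp h]
  -- step 4: -c is an eigenvalue
  have hexp : Complex.exp (-(Complex.I * (θ:ℂ))) * Complex.exp (Complex.I * (θ:ℂ)) = 1 := by
    rw [← Complex.exp_add]; simp
  have hdet2 : det ((Complex.I * (c:ℂ)) • Ohat θ + (c:ℂ) • (1 : Matrix (Fin 2) (Fin 2) ℂ)) = 0 := by
    rw [det_aux]
    linear_combination (c:ℂ)^2 * Complex.I_sq
  have hdetz : det (H + (c:ℂ) • 1) = 0 := by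
    have hrw : H + (c:ℂ) • 1 = V * φ ((Complex.I * (c:ℂ)) • M₀ + (c:ℂ) • 1) * Vᴴ := by
      rw [map_add, _root_.map_smul, _root_.map_smul, _root_.map_one, hHf]
      rw [Matrix.mul_add, Matrix.add_mul, Matrix.mul_smul, Matrix.smul_mul,
          Matrix.mul_smul, Matrix.smul_mul, Matrix.mul_one, hV]
    have hblocks : ((Complex.I * (c:ℂ)) • M₀ + (c:ℂ) • 1 :
        Matrix (Fin 2 ⊕ Fin (N-2)) (Fin 2 ⊕ Fin (N-2)) ℂ) =
        Matrix.fromBlocks ((Complex.I * (c:ℂ)) • Ohat θ + (c:ℂ) • 1) 0 0 ((c:ℂ) • 1) := by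
      rw [hM₀, ← Matrix.fromBlocks_one, Matrix.fromBlocks_smul, Matrix.fromBlocks_smul,
        Matrix.fromBlocks_add]
      simp
    rw [hrw, det_mul, det_mul, hφ, Matrix.reindexAlgEquiv_apply, Matrix.det_reindex_self,
      hblocks, Matrix.det_fromBlocks_zero₂₁, hdet2]
    ring
  have hex : ∃ i, hH.eigenvalues i = -c := by
    have hst := hH.spectral_theorem
    set U : Matrix (Fin N) (Fin N) ℂ := (hH.eigenvectorUnitary : Matrix (Fin N) (Fin N) ℂ) with hU
    have hU1 : U * star U = 1 := (Matrix.mem_unitaryGroup_iff).mp hH.eigenvectorUnitary.2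
    have hrw : H + (c:ℂ) • 1 =
        U * (Matrix.diagonal (fun i => (hH.eigenvalues i : ℂ) + c)) * star U := by
      have h1 : (c:ℂ) • (1 : Matrix (Fin N) (Fin N) ℂ) = U * ((c:ℂ) • 1) * star U := by
        rw [Matrix.mul_smul, Matrix.smul_mul, Matrix.mul_one, hU1]
      have h2 : (Matrix.diagonal (RCLike.ofReal ∘ hH.eigenvalues) : Matrix (Fin N) (Fin N) ℂ)
          + (c:ℂ) • 1 = Matrix.diagonal (fun i => (hH.eigenvalues i : ℂ) + c) := by
        rw [← Matrix.diagonal_one, ← Matrix.diagonal_smul, Matrix.diagonal_add]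
        congr 1
        funext i
        simp [Function.comp]
      rw [← h2, Matrix.mul_add, Matrix.add_mul,
        ← (show H = U * Matrix.diagonal (RCLike.ofReal ∘ hH.eigenvalues) * star U from hst), ← h1]
    have hdD : det (Matrix.diagonal (fun i => (hH.eigenvalues i : ℂ) + c)) = 0 := by
      have h3 := hdetz
      rw [hrw, det_mul, det_mul] at h3
      have h4 : det U * det (star U) = 1 := by rw [← det_mul, hU1, det_one]
      have hu0 : det U ≠ 0 := left_ne_zero_of_mul_eq_one h4
      have hsu0 : det (star U) ≠ 0 := right_ne_zero_of_mul_eq_one h4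
      rcases mul_eq_zero.mp h3 with h | h
      · rcases mul_eq_zero.mp h with h | h
        · exact absurd h hu0
        · exact h
      · exact absurd h hsu0
    rw [Matrix.det_diagonal] at hdD
    obtain ⟨i, _, hi⟩ := Finset.prod_eq_zero_iff.mp hdD
    refine ⟨i, ?_⟩
    have : (hH.eigenvalues i : ℂ) = -(c:ℂ) := eq_neg_of_add_eq_zero_left hi
    exact_mod_cast this
  -- step 5: the infimum of the eigenvalues is -c
  have hnone : Nonempty (Fin N) := ⟨⟨0, by omega⟩⟩
  have hE : (⨅ i, hH.eigenvalues i) = -c := by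
    obtain ⟨j0, hj0⟩ := hex
    refine le_antisymm (hj0 ▸ ciInf_le (Set.Finite.bddBelow (Set.finite_range _)) j0)
      (le_ciInf ?_)
    intro i
    rcases hbound i with h|h|h <;> rw [h] <;> linarith
  -- step 6: the moment computation
  obtain ⟨q, rfl⟩ : ∃ q, p = q + 1 := ⟨p - 1, by omega⟩
  have hSm : H - ((⨅ i, hH.eigenvalues i : ℝ)) • (1 : Matrix (Fin N) (Fin N) ℂ)
      = (c:ℂ) • (V * φ (Matrix.fromBlocks (Bm θ) 0 0 1) * Vᴴ) := by
    rw [hE, rsmulC]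
    push_cast
    rw [neg_smul, sub_neg_eq_add, hHf]
    have hW : (Matrix.fromBlocks (Bm θ) 0 0 1 :
        Matrix (Fin 2 ⊕ Fin (N-2)) (Fin 2 ⊕ Fin (N-2)) ℂ) = 1 + Complex.I • M₀ := by
      rw [hM₀, ← Matrix.fromBlocks_one, Matrix.fromBlocks_smul, Matrix.fromBlocks_add]
      simp [Bm]
    rw [hW, map_add, _root_.map_smul, _root_.map_one, Matrix.mul_add, Matrix.add_mul,
      Matrix.mul_one, hV, Matrix.mul_smul, Matrix.smul_mul]
    module
  have hpow : (H - ((⨅ i, hH.eigenvalues i : ℝ)) • (1 : Matrix (Fin N) (Fin N) ℂ)) ^ (q+1)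
      = ((c:ℂ)^(q+1)) • (V * φ (Matrix.fromBlocks (((2:ℂ)^q) • Bm θ) 0 0 1) * Vᴴ) := by
    rw [hSm, smul_pow, myConjPow V _ hVV q, ← map_pow, Wm_pow, Bm_pow]
  set i0 : Fin N := (⟨0, by omega⟩ : Fin N) with hi0def
  have he0 : e.symm i0 = Sum.inl (0 : Fin 2) := by
    rw [Equiv.symm_apply_eq, he]
    ext
    simp [hi0def]
  have hdot : star ψ ⬝ᵥ
      ((H - (⨅ i, hH.eigenvalues i : ℝ) • (1 : Matrix (Fin N) (Fin N) ℂ)) ^ (q+1) *ᵥ ψ)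
      = ((c:ℂ)^(q+1) * 2^q) := by
    rw [hpow, hψ]
    set Y : Matrix (Fin N) (Fin N) ℂ := φ (Matrix.fromBlocks (((2:ℂ)^q) • Bm θ) 0 0 1) with hY
    have hchain : ((c:ℂ)^(q+1) • (V * Y * Vᴴ)) *ᵥ (V *ᵥ Pi.single i0 1)
        = (c:ℂ)^(q+1) • (V *ᵥ (Y *ᵥ Pi.single i0 1)) := by
      rw [Matrix.smul_mulVec, Matrix.mulVec_mulVec]
      have : V * Y * Vᴴ * V = V * Y := by
        rw [Matrix.mul_assoc (V*Y), hVV, Matrix.mul_one]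
      rw [this, ← Matrix.mulVec_mulVec]
    rw [hchain]
    rw [dotProduct_smul]
    rw [Matrix.star_mulVec]
    rw [Matrix.dotProduct_mulVec]
    rw [Matrix.vecMul_vecMul]
    rw [hVV]
    rw [Matrix.vecMul_one]
    have hstar : star (Pi.single i0 (1:ℂ)) = (Pi.single i0 1 : Fin N → ℂ) := by
      ext j
      by_cases h : j = i0 <;> simp [h, Pi.single_apply]
    rw [hstar]
    have hY00 : Y i0 i0 = (2:ℂ)^q := by
      rw [hY, hφ, Matrix.reindexAlgEquiv_apply, Matrix.reindex_apply, Matrix.submatrix_apply,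
        he0]
      simp [Bm, Ohat]
    simp [Matrix.mulVec_single, single_dotProduct, hY00]
  rw [hdot] at hconstraint
  have hre : (((c:ℂ)^(q+1) * 2^q)).re = c^(q+1) * 2^q := by
    have : ((c:ℂ)^(q+1) * 2^q) = (((c^(q+1) * 2^q : ℝ)) : ℂ) := by push_cast; ring
    rw [this, Complex.ofReal_re]
  rw [hre] at hconstraint
  -- step 7: real arithmetic
  have h2c : (0:ℝ) < 2*c := by linarith
  have hval : (c^(q+1) * 2^q : ℝ) = (2*c)^(q+1) / 2 := by
    rw [mul_pow]
    field_simp [pow_succ]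
    ring
  rw [hval, Real.div_rpow (by positivity) (by norm_num),
    ← Real.rpow_natCast (2*c) (q+1), ← Real.rpow_mul h2c.le] at hconstraint
  have hmul1 : ((q+1:ℕ):ℝ) * (1/((q+1:ℕ):ℝ)) = 1 := by
    have : ((q+1:ℕ):ℝ) ≠ 0 := by positivity
    field_simp
  rw [hmul1, Real.rpow_one] at hconstraint
  have h2p : (0:ℝ) < (2:ℝ) ^ (1/((q+1:ℕ):ℝ)) := Real.rpow_pos_of_pos (by norm_num) _
  have hfin : κ * (2:ℝ) ^ (1/((q+1:ℕ):ℝ)) = Real.pi / T := by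
    rw [← hconstraint, hc]
    field_simp
  rw [hfin]
  rw [div_div_eq_mul_div, mul_comm, mul_div_assoc, div_self (ne_of_gt hπ), mul_one]
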